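/- Let d_1, ..., d_{N_A} be nonnegative reals, d̄ = max_k d_k, Δ = Σ_k ⌊d̄ − d_k⌋, and m a nonnegative integer with m > Δ. Then the optimal value of minimizing max_k (d_k + n_k) over nonnegative integers n_1,...,n_{N_A} with Σ_k n_k = m equals min over j = 1,...,N_A of ( d_j + ⌈ (m + Σ_{k=1}^{N_A} ⌈d_k − d_j⌉) / N_A ⌉ ). -/

import Mathlib

open Finset

lemma exists_nv (N : ℕ) (c : Fin N → ℕ) (m : ℕ) (h : m ≤ ∑ k, c k) :
    ∃ nv : Fin N → ℕ, (∀ k, nv k ≤ c k) ∧ ∑ k, nv k = m := by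
  induction m with
  | zero => exact ⟨fun _ => 0, fun k => Nat.zero_le _, by simp⟩
  | succ m ih =>
    obtain ⟨nv, hle, hsum⟩ := ih (Nat.le_of_succ_le h)
    have hlt : ∑ k, nv k < ∑ k, c k := by omega
    obtain ⟨k, -, hk⟩ := Finset.exists_lt_of_sum_lt hlt
    refine ⟨Function.update nv k (nv k + 1), fun i => ?_, ?_⟩
    · rcases eq_or_ne i k with rfl | hik
      · simpa using hk
      · simp [Function.update_of_ne hik, hle i]
    · rw [Finset.sum_update_of_mem (mem_univ k), Finset.sdiff_singleton_eq_erase]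
      have := Finset.add_sum_erase univ nv (mem_univ k)
      omega

theorem stmt5 (N : ℕ) (hN : 0 < N) (d : Fin N → ℝ) (hd : ∀ k, 0 ≤ d k) (m : ℕ)
    (dbar : ℝ) (hdbar : IsGreatest (Set.range d) dbar)
    (hm : (∑ k, ⌊dbar - d k⌋) < (m : ℤ)) :
    IsLeast
      {x : ℝ | ∃ nv : Fin N → ℕ, (∑ k, nv k) = m ∧
        x = Finset.univ.sup' ⟨⟨0, hN⟩, Finset.mem_univ _⟩
          (fun k => d k + (nv k : ℝ))}
      (Finset.univ.inf' ⟨⟨0, hN⟩, Finset.mem_univ _⟩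
        (fun j => d j +
          ((⌈((m : ℝ) + ∑ k, ((⌈d k - d j⌉ : ℤ) : ℝ)) / (N : ℝ)⌉ : ℤ) : ℝ))) := by
  have hne : (Finset.univ : Finset (Fin N)).Nonempty := ⟨⟨0, hN⟩, Finset.mem_univ _⟩
  have hdle : ∀ k, d k ≤ dbar := fun k => hdbar.2 ⟨k, rfl⟩
  have hNR : (0:ℝ) < (N:ℝ) := by exact_mod_cast hN
  set S : Fin N → ℤ := fun j => ∑ k, ⌈d k - d j⌉ with hS
  set c : Fin N → ℤ := fun j => ⌈((m : ℝ) + (S j : ℝ)) / (N : ℝ)⌉ with hc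
  have hSr : ∀ j, ((S j : ℤ) : ℝ) = ∑ k, ((⌈d k - d j⌉ : ℤ) : ℝ) := by
    intro j; simp only [hS]; push_cast; ring
  have hgoal : (fun j => d j +
      ((⌈((m : ℝ) + ∑ k, ((⌈d k - d j⌉ : ℤ) : ℝ)) / (N : ℝ)⌉ : ℤ) : ℝ))
      = fun j => d j + (c j : ℝ) := by
    funext j; rw [← hSr j]
  rw [hgoal]
  -- key fact: c j ≥ ⌈dbar - d j⌉
  have hC : ∀ j, ⌈dbar - d j⌉ ≤ c j := by
    intro j
    have h1 : ∀ k : Fin N, ⌈dbar - d j⌉ - 1 ≤ ⌊dbar - d k⌋ + ⌈d k - d j⌉ := by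
      intro k
      have e1 : dbar - d j = (dbar - d k) + (d k - d j) := by ring
      have e2 := Int.ceil_add_le (dbar - d k) (d k - d j)
      have e3 := Int.ceil_le_floor_add_one (dbar - d k)
      rw [e1]; omega
    have h2 : (N:ℤ) * (⌈dbar - d j⌉ - 1) ≤ ∑ k, (⌊dbar - d k⌋ + ⌈d k - d j⌉) := by
      calc (N:ℤ) * (⌈dbar - d j⌉ - 1) = ∑ _k : Fin N, (⌈dbar - d j⌉ - 1) := by
            simp [Finset.sum_const, Finset.card_univ, mul_comm]; ring
        _ ≤ _ := Finset.sum_le_sum (fun k _ => h1 k)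
    rw [Finset.sum_add_distrib] at h2
    have hSj : S j = ∑ k, ⌈d k - d j⌉ := rfl
    have h3 : (N:ℤ) * (⌈dbar - d j⌉ - 1) < (m : ℤ) + S j := by omega
    have h4 : ((⌈dbar - d j⌉ - 1 : ℤ) : ℝ) < ((m : ℝ) + (S j : ℝ)) / (N : ℝ) := by
      rw [lt_div_iff₀ hNR]
      have h3' : (((N:ℤ) * (⌈dbar - d j⌉ - 1) : ℤ) : ℝ) < (((m : ℤ) + S j : ℤ) : ℝ) := by
        exact_mod_cast h3
      push_cast at h3' ⊢
      linarith
    have h5 : ⌈dbar - d j⌉ - 1 < c j := Int.lt_ceil.mpr h4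
    omega
  have hc0 : ∀ j, 0 ≤ c j := fun j =>
    le_trans (Int.ceil_nonneg (by linarith [hdle j])) (hC j)
  -- lower bound
  have hlb : ∀ nv : Fin N → ℕ, (∑ k, nv k) = m →
      Finset.univ.inf' hne (fun j => d j + (c j : ℝ)) ≤
        Finset.univ.sup' hne (fun k => d k + (nv k : ℝ)) := by
    intro nv hsum
    obtain ⟨j, -, hj⟩ := Finset.exists_mem_eq_sup' hne (fun k => d k + (nv k : ℝ))
    have hkle : ∀ k, ⌈d k - d j⌉ ≤ (nv j : ℤ) - (nv k : ℤ) := by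
      intro k
      have hle' : d k + (nv k : ℝ) ≤ d j + (nv j : ℝ) := by
        have := Finset.le_sup' (fun k => d k + (nv k : ℝ)) (mem_univ k)
        rw [hj] at this; exact this
      rw [Int.ceil_le]; push_cast; linarith
    have hsZ : (m : ℤ) + S j ≤ (N:ℤ) * (nv j : ℤ) := by
      have h6 := Finset.sum_le_sum (s := univ) (fun k _ => hkle k)
      rw [Finset.sum_sub_distrib, Finset.sum_const, Finset.card_univ] at h6
      have hs2 : (∑ k, (nv k : ℤ)) = (m : ℤ) := by exact_mod_cast hsum
      have hSj : S j = ∑ k, ⌈d k - d j⌉ := rfl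
      simp only [Fintype.card_fin, nsmul_eq_mul] at h6
      omega
    have hcj : c j ≤ (nv j : ℤ) := by
      rw [hc, Int.ceil_le, div_le_iff₀ hNR]
      have h7 : (((m : ℤ) + S j : ℤ) : ℝ) ≤ (((N:ℤ) * (nv j : ℤ) : ℤ) : ℝ) := by
        exact_mod_cast hsZ
      push_cast at h7 ⊢
      linarith
    calc Finset.univ.inf' hne (fun j => d j + (c j : ℝ)) ≤ d j + (c j : ℝ) :=
          Finset.inf'_le _ (mem_univ j)
      _ ≤ d j + (nv j : ℝ) := by
          have : ((c j : ℤ) : ℝ) ≤ ((nv j : ℤ) : ℝ) := by exact_mod_cast hcj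
          push_cast at this; linarith
      _ = _ := hj.symm
  constructor
  · -- membership
    obtain ⟨j1, -, hj1⟩ := Finset.exists_mem_eq_inf' hne (fun j => d j + (c j : ℝ))
    set cap : Fin N → ℕ := fun k => (c j1 - ⌈d k - d j1⌉).toNat with hcap
    have hcapZ : ∀ k, ((cap k : ℤ)) = c j1 - ⌈d k - d j1⌉ := by
      intro k
      have h8 : ⌈d k - d j1⌉ ≤ ⌈dbar - d j1⌉ :=
        Int.ceil_le_ceil (by linarith [hdle k])
      have h9 := hC j1
      simp only [hcap]
      omega
    have hcapsum : m ≤ ∑ k, cap k := by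
      have h1 : ((m:ℝ) + (S j1 : ℝ)) / (N:ℝ) ≤ (c j1 : ℝ) := by
        rw [hc]; exact Int.le_ceil _
      have h2 : (m : ℤ) + S j1 ≤ (N:ℤ) * c j1 := by
        rw [div_le_iff₀ hNR] at h1
        have : (((m:ℤ) + S j1 : ℤ) : ℝ) ≤ (((N:ℤ) * c j1 : ℤ) : ℝ) := by push_cast; linarith
        exact_mod_cast this
      have h3 : (∑ k, (cap k : ℤ)) = (N:ℤ) * c j1 - S j1 := by
        simp only [hcapZ]
        rw [Finset.sum_sub_distrib, Finset.sum_const, Finset.card_univ]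
        have hSj : S j1 = ∑ k, ⌈d k - d j1⌉ := rfl
        simp [nsmul_eq_mul, hSj]
      have h4 : (m : ℤ) ≤ ∑ k, (cap k : ℤ) := by omega
      exact_mod_cast h4
    obtain ⟨nv, hnvle, hnvsum⟩ := exists_nv N cap m hcapsum
    have hub : Finset.univ.sup' hne (fun k => d k + (nv k : ℝ)) ≤ d j1 + (c j1 : ℝ) := by
      apply Finset.sup'_le
      intro k _
      have h1 : ((nv k : ℤ) : ℝ) ≤ ((cap k : ℤ) : ℝ) := by exact_mod_cast hnvle k
      rw [hcapZ k] at h1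
      have h2 : (d k : ℝ) - d j1 ≤ ((⌈d k - d j1⌉ : ℤ) : ℝ) := Int.le_ceil _
      push_cast at h1
      linarith
    have key : Finset.univ.inf' hne (fun j => d j + (c j : ℝ)) =
        Finset.univ.sup' hne (fun k => d k + (nv k : ℝ)) := by
      have := hlb nv hnvsum
      rw [hj1] at this ⊢
      linarith
    exact ⟨nv, hnvsum, key⟩
  · rintro x ⟨nv, hsum, rfl⟩
    exact hlb nv hsum
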